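/- Let G be a group, H a subgroup of G, x ∈ G, and P a positive cone of a left ordering of G such that 1 <_P x and x is cofinal to H (for every h ∈ H there is N ≥ 1 with x^{-N} <_P h <_P x^N). Then for every h ∈ H there exists a unique integer N ∈ ℤ with x^N ≤_P h <_P x^{N+1}. -/

import Mathlib

/-- A subset `P ⊆ G` is the positive cone of a left ordering: `P·P ⊆ P` and
`G = P ⊔ P⁻¹ ⊔ {1}`. -/
def IsPosCone {G : Type*} [Group G] (P : Set G) : Prop :=
  (∀ a ∈ P, ∀ b ∈ P, a * b ∈ P) ∧
  (∀ g : G, g ∈ P ∨ g⁻¹ ∈ P ∨ g = 1) ∧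
  (∀ g : G, g ∈ P → g⁻¹ ∉ P) ∧
  (1 : G) ∉ P

/-- The left-invariant order determined by a positive cone: `a <_P b` iff `a⁻¹ b ∈ P`. -/
def ltC {G : Type*} [Group G] (P : Set G) (a b : G) : Prop := a⁻¹ * b ∈ P

/-- The non-strict order determined by a positive cone. -/
def leC {G : Type*} [Group G] (P : Set G) (a b : G) : Prop := ltC P a b ∨ a = b

section Aux

variable {G : Type*} [Group G] {P : Set G}

lemma ltC_trans (hP : IsPosCone P) {a b c : G} (h1 : ltC P a b) (h2 : ltC P b c) :
    ltC P a c := by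
  have := hP.1 _ h1 _ h2
  simpa [ltC, mul_assoc] using this

lemma ltC_leC_trans (hP : IsPosCone P) {a b c : G} (h1 : ltC P a b) (h2 : leC P b c) :
    ltC P a c := by
  rcases h2 with h2 | rfl
  · exact ltC_trans hP h1 h2
  · exact h1

lemma leC_trans (hP : IsPosCone P) {a b c : G} (h1 : leC P a b) (h2 : leC P b c) :
    leC P a c := by
  rcases h1 with h1 | rfl
  · exact Or.inl (ltC_leC_trans hP h1 h2)
  · exact h2

lemma leC_ltC_trans (hP : IsPosCone P) {a b c : G} (h1 : leC P a b) (h2 : ltC P b c) :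
    ltC P a c := by
  rcases h1 with h1 | rfl
  · exact ltC_trans hP h1 h2
  · exact h2

lemma ltC_irrefl (hP : IsPosCone P) (a : G) : ¬ ltC P a a := by
  simp [ltC, hP.2.2.2]

lemma ltC_asymm (hP : IsPosCone P) {a b : G} (h : ltC P a b) : ¬ ltC P b a := by
  intro h'
  exact ltC_irrefl hP a (ltC_trans hP h h')

lemma ltC_total (hP : IsPosCone P) (a b : G) : ltC P a b ∨ ltC P b a ∨ a = b := by
  rcases hP.2.1 (a⁻¹ * b) with h | h | h
  · exact Or.inl h
  · right; left; simpa [ltC, mul_inv_rev] using h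
  · right; right
    have : a * (a⁻¹ * b) = a * 1 := by rw [h]
    simpa [mul_assoc] using this.symm

lemma posCone_zpow_mem (hP : IsPosCone P) {x : G} (hx : ltC P 1 x) :
    ∀ k : ℤ, 1 ≤ k → x ^ k ∈ P := by
  have hxP : x ∈ P := by simpa [ltC] using hx
  intro k hk
  refine Int.le_induction (motive := fun n _ => x ^ n ∈ P) ?_ ?_ k hk
  · simpa using hxP
  · intro n hn ih
    rw [zpow_add_one]
    exact hP.1 _ ih _ hxP

lemma ltC_zpow (hP : IsPosCone P) {x : G} (hx : ltC P 1 x) {m n : ℤ} (h : m < n) :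
    ltC P (x ^ m) (x ^ n) := by
  have : (x ^ m)⁻¹ * x ^ n = x ^ (n - m) := by
    rw [← zpow_neg, ← zpow_add, neg_add_eq_sub]
  rw [ltC, this]
  exact posCone_zpow_mem hP hx _ (by omega)

end Aux

/-- if `1 <_P x` and `x` is cofinal to `H` with respect to the left
ordering with positive cone `P`, then every `h ∈ H` satisfies
`x^N ≤_P h <_P x^(N+1)` for a unique integer `N`. -/
theorem existsUnique_rho {G : Type*} [Group G] (P : Set G) (hP : IsPosCone P)
    (H : Subgroup G) (x : G) (hx : ltC P 1 x)
    (hcof : ∀ h ∈ H, ∃ N : ℕ, 1 ≤ N ∧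
      ltC P (x ^ (-(N : ℤ))) h ∧ ltC P h (x ^ (N : ℤ))) :
    ∀ h ∈ H, ∃! N : ℤ, leC P (x ^ N) h ∧ ltC P h (x ^ (N + 1)) := by
  intro h hh
  obtain ⟨N, hN1, hlow, hhigh⟩ := hcof h hh
  -- the set of exponents n with x^n ≤ h
  set S : Set ℤ := {n : ℤ | leC P (x ^ n) h} with hS
  have hmem : (-(N : ℤ)) ∈ S := Or.inl hlow
  have hbdd : ∀ n ∈ S, n ≤ (N : ℤ) := by
    intro n hn
    by_contra hc
    push_neg at hc
    have h1 : ltC P (x ^ (N : ℤ)) (x ^ n) := ltC_zpow hP hx hc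
    have h2 : ltC P h (x ^ n) := ltC_trans hP hhigh h1
    rcases hn with hn | hn
    · exact ltC_asymm hP h2 hn
    · exact ltC_irrefl hP _ (hn ▸ h2)
  obtain ⟨M, hMS, hMmax⟩ := Int.exists_greatest_of_bdd ⟨(N : ℤ), hbdd⟩ ⟨_, hmem⟩
  refine ⟨M, ⟨hMS, ?_⟩, ?_⟩
  · -- M+1 ∉ S, so h < x^(M+1)
    have hnot : (M + 1) ∉ S := fun hmem' => by
      have := hMmax _ hmem'; omega
    rcases ltC_total hP h (x ^ (M + 1)) with h1 | h1 | h1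
    · exact h1
    · exact absurd (Or.inl h1) hnot
    · exact absurd (Or.inr h1.symm) hnot
  · intro K ⟨hK1, hK2⟩
    by_contra hne
    rcases lt_or_gt_of_ne hne with hlt | hlt
    · -- K < M : x^(K+1) ≤ x^M ≤ h, but h < x^(K+1)
      have h1 : leC P (x ^ (K + 1)) (x ^ M) := by
        rcases eq_or_lt_of_le (by omega : K + 1 ≤ M) with he | he
        · exact Or.inr (by rw [he])
        · exact Or.inl (ltC_zpow hP hx he)
      have h2 : ltC P h h := ltC_leC_trans hP hK2 (leC_trans hP h1 hMS)
      exact ltC_irrefl hP h h2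
    · -- M < K : x^(M+1) ≤ x^K ≤ h, but h < x^(M+1)
      have h2 : ltC P h (x ^ (M + 1)) := by
        have hnot : (M + 1) ∉ S := fun hmem' => by
          have := hMmax _ hmem'; omega
        rcases ltC_total hP h (x ^ (M + 1)) with h1 | h1 | h1
        · exact h1
        · exact absurd (Or.inl h1) hnot
        · exact absurd (Or.inr h1.symm) hnot
      have h1 : leC P (x ^ (M + 1)) (x ^ K) := by
        rcases eq_or_lt_of_le (by omega : M + 1 ≤ K) with he | he
        · exact Or.inr (by rw [he])
        · exact Or.inl (ltC_zpow hP hx he)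
      have h3 : ltC P h h := ltC_leC_trans hP h2 (leC_trans hP h1 hK1)
      exact ltC_irrefl hP h h3
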